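/- Let c > 0 and let α_i, β_i, α_j, β_j > 0 satisfy α_i + β_i = α_j + β_j = c, α_i < α_j, and α_j ≤ β_j. Let K ≥ 1 and let X₁, …, X_K be i.i.d. samples from the Beta distribution B(α_i, β_i) (density x^(α−1)(1−x)^(β−1)/B(α,β) on (0,1)) and Y₁, …, Y_K i.i.d. samples from B(α_j, β_j), with all 2K variables jointly independent. Write μ_i = α_i/c, μ_j = α_j/c, σ_i² = μ_i(1−μ_i)/(1+c), σ_j² = μ_j(1−μ_j)/(1+c), and let X̄, Ȳ be the sample means. Then P(X̄ ≥ Ȳ) ≤ (σ_i² + σ_j²) / (K (μ_j − μ_i)²) ≤ 2σ_j² / (K (μ_j − μ_i)²). -/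

import Mathlib

open MeasureTheory ProbabilityTheory

/-- The Beta distribution `B(a, b)`: the measure on `ℝ` supported on `(0,1)` with density
`x ^ (a−1) * (1−x) ^ (b−1) / B(a,b)`, where `B(a,b) = ∫₀¹ x^(a−1) (1−x)^(b−1) dx` is the
Beta function. -/
noncomputable def betaMeasure (a b : ℝ) : Measure ℝ :=
  (volume.restrict (Set.Ioo (0 : ℝ) 1)).withDensity fun x =>
    ENNReal.ofReal (x ^ (a - 1) * (1 - x) ^ (b - 1) /
      ∫ y in Set.Ioo (0 : ℝ) 1, y ^ (a - 1) * (1 - y) ^ (b - 1))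

open Set
open scoped ENNReal NNReal

noncomputable def betaReal (a b : ℝ) : ℝ :=
  ∫ y in Set.Ioo (0 : ℝ) 1, y ^ (a - 1) * (1 - y) ^ (b - 1)

lemma betaReal_eq_complex (a b : ℝ) :
    (betaReal a b : ℂ) = Complex.betaIntegral a b := by
  rw [Complex.betaIntegral, betaReal]
  rw [intervalIntegral.integral_of_le zero_le_one, ← MeasureTheory.integral_Ioc_eq_integral_Ioo]
  calc ((∫ y in Set.Ioc (0:ℝ) 1, y ^ (a - 1) * (1 - y) ^ (b - 1) : ℝ) : ℂ)
      = ∫ y in Set.Ioc (0:ℝ) 1, ((y ^ (a - 1) * (1 - y) ^ (b - 1) : ℝ) : ℂ) :=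
        integral_ofReal.symm
    _ = _ := by
        refine setIntegral_congr_fun measurableSet_Ioc (fun x hx => ?_)
        rw [Complex.ofReal_mul, Complex.ofReal_cpow hx.1.le,
          Complex.ofReal_cpow (by linarith [hx.2] : (0:ℝ) ≤ 1 - x)]
        push_cast
        ring

lemma betaReal_eq_Gamma {a b : ℝ} (ha : 0 < a) (hb : 0 < b) :
    betaReal a b = Real.Gamma a * Real.Gamma b / Real.Gamma (a + b) := by
  have h := Complex.Gamma_mul_Gamma_eq_betaIntegral (s := a) (t := b)
    (by simpa using ha) (by simpa using hb)
  rw [← betaReal_eq_complex] at h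
  have hG : Real.Gamma (a + b) ≠ 0 := (Real.Gamma_pos_of_pos (by linarith)).ne'
  have : Real.Gamma a * Real.Gamma b = Real.Gamma (a + b) * betaReal a b := by
    rw [← Complex.ofReal_add, Complex.Gamma_ofReal, Complex.Gamma_ofReal,
      Complex.Gamma_ofReal] at h
    exact_mod_cast h
  field_simp [this]
  rw [this]; ring

lemma betaReal_pos {a b : ℝ} (ha : 0 < a) (hb : 0 < b) : 0 < betaReal a b := by
  rw [betaReal_eq_Gamma ha hb]
  exact div_pos (mul_pos (Real.Gamma_pos_of_pos ha) (Real.Gamma_pos_of_pos hb))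
    (Real.Gamma_pos_of_pos (by linarith))

lemma betaReal_succ {a b : ℝ} (ha : 0 < a) (hb : 0 < b) :
    betaReal (a + 1) b = (a / (a + b)) * betaReal a b := by
  have hab : (0:ℝ) < a + b := by linarith
  rw [betaReal_eq_Gamma (by linarith) hb, betaReal_eq_Gamma ha hb,
    Real.Gamma_add_one ha.ne', show a + 1 + b = (a + b) + 1 by ring,
    Real.Gamma_add_one hab.ne']
  field_simp


lemma g_meas (a b : ℝ) : Measurable fun x : ℝ => x ^ (a - 1) * (1 - x) ^ (b - 1) :=
  (measurable_id.pow_const _).mul ((measurable_const.sub measurable_id).pow_const _)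

lemma g_nonneg {a b x : ℝ} (hx : x ∈ Set.Ioo (0:ℝ) 1) :
    0 ≤ x ^ (a - 1) * (1 - x) ^ (b - 1) :=
  mul_nonneg (Real.rpow_nonneg hx.1.le _) (Real.rpow_nonneg (by linarith [hx.2]) _)

lemma integral_betaMeasure (a b : ℝ) (ha : 0 < a) (hb : 0 < b) (φ : ℝ → ℝ) :
    ∫ x, φ x ∂_root_.betaMeasure a b
      = (betaReal a b)⁻¹ *
        ∫ x in Set.Ioo (0:ℝ) 1, φ x * (x ^ (a - 1) * (1 - x) ^ (b - 1)) := by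
  have hB := betaReal_pos ha hb
  have hmeas : Measurable fun x : ℝ =>
      ((x ^ (a - 1) * (1 - x) ^ (b - 1) / betaReal a b).toNNReal) :=
    ((g_meas a b).div_const _).real_toNNReal
  rw [_root_.betaMeasure, show (fun x : ℝ => ENNReal.ofReal (x ^ (a - 1) * (1 - x) ^ (b - 1) /
      ∫ y in Set.Ioo (0 : ℝ) 1, y ^ (a - 1) * (1 - y) ^ (b - 1)))
    = fun x => (((x ^ (a - 1) * (1 - x) ^ (b - 1) / betaReal a b).toNNReal : ℝ≥0) : ℝ≥0∞)
    from rfl]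
  rw [integral_withDensity_eq_integral_smul hmeas, ← integral_const_mul]
  refine setIntegral_congr_fun measurableSet_Ioo (fun x hx => ?_)
  rw [NNReal.smul_def, Real.coe_toNNReal _ (div_nonneg (g_nonneg hx) hB.le)]
  field_simp
  rw [smul_eq_mul]
  field_simp

lemma betaMeasure_mean {a b : ℝ} (ha : 0 < a) (hb : 0 < b) :
    ∫ x, x ∂_root_.betaMeasure a b = a / (a + b) := by
  have hB := betaReal_pos ha hb
  rw [integral_betaMeasure a b ha hb (fun x => x)]
  have : ∫ x in Set.Ioo (0:ℝ) 1, x * (x ^ (a - 1) * (1 - x) ^ (b - 1))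
      = betaReal (a + 1) b := by
    rw [betaReal]
    refine setIntegral_congr_fun measurableSet_Ioo (fun x hx => ?_)
    rw [show a + 1 - 1 = 1 + (a - 1) by ring, Real.rpow_add hx.1, Real.rpow_one]
    ring
  rw [this, betaReal_succ ha hb]
  field_simp

lemma betaMeasure_sq {a b : ℝ} (ha : 0 < a) (hb : 0 < b) :
    ∫ x, x ^ 2 ∂_root_.betaMeasure a b = a * (a + 1) / ((a + b) * (a + b + 1)) := by
  have hB := betaReal_pos ha hb
  have hab : (0:ℝ) < a + b := by linarith
  rw [integral_betaMeasure a b ha hb (fun x => x ^ 2)]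
  have : ∫ x in Set.Ioo (0:ℝ) 1, x ^ 2 * (x ^ (a - 1) * (1 - x) ^ (b - 1))
      = betaReal (a + 2) b := by
    rw [betaReal]
    refine setIntegral_congr_fun measurableSet_Ioo (fun x hx => ?_)
    rw [show a + 2 - 1 = 1 + (1 + (a - 1)) by ring, Real.rpow_add hx.1, Real.rpow_add hx.1,
      Real.rpow_one, sq]
    ring
  rw [this, show a + 2 = (a + 1) + 1 by ring, betaReal_succ (by linarith) hb,
    betaReal_succ ha hb]
  field_simp
  ring

lemma betaMeasure_compl_eq_zero (a b : ℝ) : _root_.betaMeasure a b (Set.Ioo (0:ℝ) 1)ᶜ = 0 := by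
  rw [_root_.betaMeasure, withDensity_apply _ measurableSet_Ioo.compl,
    Measure.restrict_restrict measurableSet_Ioo.compl, Set.compl_inter_self,
    Measure.restrict_empty, lintegral_zero_measure]

lemma beta_rv_facts {Ω : Type*} [MeasurableSpace Ω] {P : Measure Ω} [IsProbabilityMeasure P]
    {W : Ω → ℝ} (hW : Measurable W) {a b : ℝ} (ha : 0 < a) (hb : 0 < b)
    (hlaw : Measure.map W P = _root_.betaMeasure a b) :
    MemLp W 2 P ∧ (∫ ω, W ω ∂P = a / (a + b)) ∧
      variance W P = (a / (a + b)) * (1 - a / (a + b)) / (1 + (a + b)) := by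
  have hab : (0:ℝ) < a + b := by linarith
  have hae : ∀ᵐ ω ∂P, W ω ∈ Set.Ioo (0:ℝ) 1 := by
    have h0 : P (W ⁻¹' (Set.Ioo (0:ℝ) 1)ᶜ) = 0 := by
      rw [← Measure.map_apply hW measurableSet_Ioo.compl, hlaw, betaMeasure_compl_eq_zero]
    filter_upwards [measure_eq_zero_iff_ae_notMem.mp h0] with ω hω
    simpa using hω
  have hbd : ∀ᵐ ω ∂P, ‖W ω‖ ≤ 1 := by
    filter_upwards [hae] with ω hω
    rw [Real.norm_eq_abs, abs_le]
    constructor <;> [linarith [hω.1]; linarith [hω.2]]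
  have hmem : MemLp W 2 P := MemLp.of_bound hW.aestronglyMeasurable 1 hbd
  have hmean : ∫ ω, W ω ∂P = a / (a + b) := by
    have := integral_map (μ := P) (φ := W) (f := fun x : ℝ => x) hW.aemeasurable
      aestronglyMeasurable_id
    rw [hlaw] at this
    rw [show (fun ω => W ω) = fun ω => (fun x : ℝ => x) (W ω) from rfl, ← this]
    exact betaMeasure_mean ha hb
  refine ⟨hmem, hmean, ?_⟩
  rw [variance_eq_sub hmem, hmean]
  have hsq : ∫ ω, (W ω) ^ 2 ∂P = a * (a + 1) / ((a + b) * (a + b + 1)) := by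
    rw [← betaMeasure_sq ha hb, ← hlaw,
      integral_map hW.aemeasurable (by fun_prop : AEStronglyMeasurable (fun x : ℝ => x ^ 2) _)]
  simp only [Pi.pow_apply] at *
  rw [hsq]
  field_simp
  ring

/-- Let `c > 0` and `αi, βi, αj, βj > 0` with `αi + βi = αj + βj = c`,
`αi < αj`, and `αj ≤ βj`. Let `K ≥ 1`, let `X₁, …, X_K` be i.i.d. samples from the Beta
distribution `B(αi, βi)` and `Y₁, …, Y_K` i.i.d. samples from `B(αj, βj)`, with all `2K`
variables jointly independent. Writing `μi = αi/c`, `μj = αj/c`,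
`σi² = μi(1−μi)/(1+c)`, `σj² = μj(1−μj)/(1+c)`, and letting `X̄, Ȳ` be the sample means,
`P(X̄ ≥ Ȳ) ≤ (σi² + σj²)/(K (μj − μi)²) ≤ 2 σj²/(K (μj − μi)²)`. -/
theorem prob_sampleMean_ge_le_of_beta
    {Ω : Type*} [MeasurableSpace Ω] {P : Measure Ω} [IsProbabilityMeasure P]
    (c αi βi αj βj : ℝ) (hc : 0 < c)
    (hαi : 0 < αi) (hβi : 0 < βi) (hαj : 0 < αj) (hβj : 0 < βj)
    (hi : αi + βi = c) (hj : αj + βj = c) (hij : αi < αj) (hjb : αj ≤ βj)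
    (K : ℕ) (hK : 1 ≤ K) (X Y : Fin K → Ω → ℝ)
    (hXmeas : ∀ k, Measurable (X k)) (hYmeas : ∀ k, Measurable (Y k))
    (hindep : iIndepFun (Sum.elim X Y) P)
    (hXlaw : ∀ k, Measure.map (X k) P = _root_.betaMeasure αi βi)
    (hYlaw : ∀ k, Measure.map (Y k) P = _root_.betaMeasure αj βj)
    (μi μj σi2 σj2 : ℝ)
    (hμi : μi = αi / c) (hμj : μj = αj / c)
    (hσi : σi2 = μi * (1 - μi) / (1 + c)) (hσj : σj2 = μj * (1 - μj) / (1 + c)) :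
    (P {ω | (∑ k, X k ω) / K ≥ (∑ k, Y k ω) / K}).toReal ≤
        (σi2 + σj2) / (K * (μj - μi) ^ 2) ∧
      (σi2 + σj2) / (K * (μj - μi) ^ 2) ≤ 2 * σj2 / (K * (μj - μi) ^ 2) := by
  have hK0 : (0:ℝ) < K := by exact_mod_cast hK
  have hΔ : 0 < μj - μi := by
    rw [hμi, hμj, div_sub_div_same]
    exact div_pos (by linarith) hc
  have hmeasSE : ∀ s, Measurable (Sum.elim X Y s) := fun s =>
    match s with
    | Sum.inl k => hXmeas k
    | Sum.inr k => hYmeas k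
  -- facts about X and Y
  have hXf := fun k => beta_rv_facts (hXmeas k) hαi hβi (hXlaw k)
  have hYf := fun k => beta_rv_facts (hYmeas k) hαj hβj (hYlaw k)
  have hXmem : ∀ k, MemLp (X k) 2 P := fun k => (hXf k).1
  have hYmem : ∀ k, MemLp (Y k) 2 P := fun k => (hYf k).1
  have hXmean : ∀ k, ∫ ω, X k ω ∂P = μi := fun k => by rw [(hXf k).2.1, hi, hμi]
  have hYmean : ∀ k, ∫ ω, Y k ω ∂P = μj := fun k => by rw [(hYf k).2.1, hj, hμj]
  have hXvar : ∀ k, variance (X k) P = σi2 := fun k => by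
    rw [(hXf k).2.2, hi, hσi, hμi]
  have hYvar : ∀ k, variance (Y k) P = σj2 := fun k => by
    rw [(hYf k).2.2, hj, hσj, hμj]
  -- the difference variables
  set Z : Fin K → Ω → ℝ := fun k => Y k - X k with hZ
  have hZmem : ∀ k, MemLp (Z k) 2 P := fun k => (hYmem k).sub (hXmem k)
  have hZint : ∀ k, Integrable (Z k) P := fun k => (hZmem k).integrable one_le_two
  have hZmean : ∀ k, ∫ ω, Z k ω ∂P = μj - μi := fun k => by
    simp only [hZ, Pi.sub_apply]
    rw [integral_sub ((hYmem k).integrable one_le_two) ((hXmem k).integrable one_le_two),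
      hXmean, hYmean]
  have hZvar : ∀ k, variance (Z k) P = σj2 + σi2 := fun k => by
    have hind : IndepFun (Y k) (X k) P :=
      hindep.indepFun (show (Sum.inr k : Fin K ⊕ Fin K) ≠ Sum.inl k by simp)
    have hvneg : variance (-(X k)) P = variance (X k) P := by
      have := variance_smul (-1 : ℝ) (X k) P
      simpa using this
    have : variance (Y k + -(X k)) P = variance (Y k) P + variance (-(X k)) P :=
      IndepFun.variance_add (hYmem k) ((hXmem k).neg) hind.neg_right
    rw [show (Z k) = Y k + -(X k) by rw [hZ]; ext ω; simp [sub_eq_add_neg],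
      this, hvneg, hXvar, hYvar]
  -- pairwise independence of the Z's
  have hZpair : Set.Pairwise ↑(Finset.univ : Finset (Fin K))
      (fun k l => IndepFun (Z k) (Z l) P) := by
    intro k _ l _ hkl
    have h := hindep.indepFun_prodMk_prodMk hmeasSE
      (Sum.inr k) (Sum.inl k) (Sum.inr l) (Sum.inl l)
      (by simp [hkl]) (by simp) (by simp) (by simp [hkl])
    exact h.comp (measurable_fst.sub measurable_snd) (measurable_fst.sub measurable_snd)
  -- the sum
  set S : Ω → ℝ := ∑ k, Z k with hS
  have hSmem : MemLp S 2 P := memLp_finsetSum' _ (fun k _ => hZmem k)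
  have hSmean : ∫ ω, S ω ∂P = K * (μj - μi) := by
    simp only [hS, Finset.sum_apply]
    rw [integral_finset_sum _ (fun k _ => hZint k)]
    simp [hZmean, Finset.sum_const, Finset.card_univ, nsmul_eq_mul]
    ring
  have hSvar : variance S P = K * (σj2 + σi2) := by
    rw [hS, IndepFun.variance_sum (fun k _ => hZmem k) hZpair]
    simp [hZvar, Finset.sum_const, Finset.card_univ, nsmul_eq_mul]
    ring
  -- Chebyshev
  have hKΔ : (0:ℝ) < K * (μj - μi) := mul_pos hK0 hΔ
  have hcheb := meas_ge_le_variance_div_sq (μ := P) hSmem hKΔ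
  have hsub : {ω | (∑ k, X k ω) / K ≥ (∑ k, Y k ω) / K}
      ⊆ {ω | K * (μj - μi) ≤ |S ω - ∫ ω', S ω' ∂P|} := by
    intro ω hω
    simp only [Set.mem_setOf_eq, ge_iff_le] at hω ⊢
    have hYX : (∑ k, Y k ω) ≤ ∑ k, X k ω := by
      have := (div_le_div_iff_of_pos_right hK0).mp hω
      linarith
    have hSω : S ω ≤ 0 := by
      simp only [hS, hZ, Finset.sum_apply, Pi.sub_apply, Finset.sum_sub_distrib]
      linarith
    rw [hSmean, abs_sub_comm, abs_of_nonneg (by linarith)]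
    linarith
  have key : (P {ω | (∑ k, X k ω) / K ≥ (∑ k, Y k ω) / K}).toReal ≤
      variance S P / (K * (μj - μi)) ^ 2 := by
    have h1 := (measure_mono hsub).trans hcheb
    have h2 := ENNReal.toReal_mono ENNReal.ofReal_ne_top h1
    rwa [ENNReal.toReal_ofReal (div_nonneg (variance_nonneg _ _) (by positivity))] at h2
  have hval : variance S P / (K * (μj - μi)) ^ 2 = (σi2 + σj2) / (K * (μj - μi) ^ 2) := by
    rw [hSvar]
    field_simp
    ring
  constructor
  · rw [← hval]; exact key
  · have hμj2 : μj ≤ 1 / 2 := by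
      rw [hμj, div_le_div_iff₀ hc (by norm_num)]
      linarith
    have hμi0 : 0 < μi := by rw [hμi]; exact div_pos hαi hc
    have hμlt : μi < μj := by linarith
    have hσ : σi2 ≤ σj2 := by
      rw [hσi, hσj]
      apply div_le_div_of_nonneg_right ?_ (by linarith)
      nlinarith
    apply div_le_div_of_nonneg_right ?_ ?_
    · linarith
    · positivity
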